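/- (Explicit certificate for the full-circulant pitch-2 inequality.) Let n ≥ 3, V := {3,...,n}, g_i(x) := ∑_{j∈[n], j≠i} x_j - 1 for i ∈ [n]. Then the polynomial identity ∑_{j=1}^n x_j - 2 ≡ δ_∅^V·(g_1 + g_2) + ∑_{i∈V} δ_{\{i\}}^V · g_i + ∑_{k=2}^{n} (∑_{I⊆V, |I|=k} δ_I^V)·(x_1 + x_2 + (k-2)) holds modulo the ideal I_01. -/
import Mathlib


open MvPolynomial Finset

noncomputable def delta (n : ℕ) (Z I : Finset (Fin n)) : MvPolynomial (Fin n) ℝ :=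
  (∏ i ∈ I, X i) * ∏ j ∈ Z \ I, (1 - X j)

noncomputable def I01 (n : ℕ) : Ideal (MvPolynomial (Fin n) ℝ) :=
  Ideal.span (Set.range fun i : Fin n => X i ^ 2 - X i)

namespace CertAux


def bval {n : ℕ} (σ : Fin n → Bool) (i : Fin n) : ℝ := if σ i then 1 else 0

noncomputable def Epoly {n : ℕ} (σ : Fin n → Bool) : MvPolynomial (Fin n) ℝ :=
  ∏ i, (if σ i then X i else 1 - X i)

lemma sum_Epoly (n : ℕ) : ∑ σ : Fin n → Bool, Epoly σ = 1 := by
  classical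
  have h : (1 : MvPolynomial (Fin n) ℝ)
      = ∏ i : Fin n, (∑ b : Bool, if b then X i else 1 - X i) := by
    simp
  rw [h, Finset.prod_univ_sum, Fintype.piFinset_univ]
  rfl

lemma X_mul_Epoly_mem {n : ℕ} (σ : Fin n → Bool) (i : Fin n) :
    X i * Epoly σ - C (bval σ i) * Epoly σ ∈ I01 n := by
  classical
  have hE : Epoly σ
      = (if σ i then X i else 1 - X i) * ∏ j ∈ Finset.univ.erase i, (if σ j then X j else 1 - X j) :=
    (Finset.mul_prod_erase Finset.univ _ (Finset.mem_univ i)).symm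
  rw [hE, ← mul_assoc, ← mul_assoc, ← sub_mul]
  apply Ideal.mul_mem_right
  have hXi : (X i ^ 2 - X i : MvPolynomial (Fin n) ℝ) ∈ I01 n :=
    Ideal.subset_span ⟨i, rfl⟩
  by_cases h : σ i
  · have hb : (if σ i = true then (X i : MvPolynomial (Fin n) ℝ) else 1 - X i) = X i := if_pos h
    have hb2 : bval σ i = 1 := by simp [bval, h]
    rw [hb, hb2, map_one]
    have : X i * X i - 1 * X i = (X i ^ 2 - X i : MvPolynomial (Fin n) ℝ) := by ring
    rw [this]; exact hXi
  · have hb : (if σ i = true then (X i : MvPolynomial (Fin n) ℝ) else 1 - X i) = 1 - X i := if_neg h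
    have hb2 : bval σ i = 0 := by simp [bval, h]
    rw [hb, hb2, map_zero]
    have : X i * (1 - X i) - 0 * (1 - X i) = -(X i ^ 2 - X i : MvPolynomial (Fin n) ℝ) := by ring
    rw [this]; exact neg_mem hXi

lemma key {n : ℕ} (p : MvPolynomial (Fin n) ℝ) :
    p - ∑ σ : Fin n → Bool, C (eval (bval σ) p) * Epoly σ ∈ I01 n := by
  classical
  induction p using MvPolynomial.induction_on with
  | C a =>
      have h : ∑ σ : Fin n → Bool, C (eval (bval σ) (C a : MvPolynomial (Fin n) ℝ)) * Epoly σ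
          = C a := by
        simp only [eval_C, ← Finset.mul_sum, sum_Epoly, mul_one]
      rw [h, sub_self]; exact zero_mem _
  | add p q hp hq =>
      have h : ∑ σ : Fin n → Bool, C (eval (bval σ) (p + q)) * Epoly σ
          = (∑ σ : Fin n → Bool, C (eval (bval σ) p) * Epoly σ)
            + ∑ σ : Fin n → Bool, C (eval (bval σ) q) * Epoly σ := by
        rw [← Finset.sum_add_distrib]
        exact Finset.sum_congr rfl fun σ _ => by rw [map_add, C_add, add_mul]
      have h2 : (p + q) - ∑ σ : Fin n → Bool, C (eval (bval σ) (p + q)) * Epoly σ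
          = (p - ∑ σ : Fin n → Bool, C (eval (bval σ) p) * Epoly σ)
            + (q - ∑ σ : Fin n → Bool, C (eval (bval σ) q) * Epoly σ) := by
        rw [h]; ring
      rw [h2]; exact add_mem hp hq
  | mul_X p i hp =>
      have h2 : ∑ σ : Fin n → Bool,
          C (eval (bval σ) p) * (X i * Epoly σ - C (bval σ i) * Epoly σ) ∈ I01 n :=
        Submodule.sum_mem _ (fun σ _ => Ideal.mul_mem_left _ _ (X_mul_Epoly_mem σ i))
      have heq : p * X i - ∑ σ : Fin n → Bool, C (eval (bval σ) (p * X i)) * Epoly σ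
          = (p - ∑ σ : Fin n → Bool, C (eval (bval σ) p) * Epoly σ) * X i
            + ∑ σ : Fin n → Bool,
              C (eval (bval σ) p) * (X i * Epoly σ - C (bval σ i) * Epoly σ) := by
        have hterm : ∀ σ ∈ (Finset.univ : Finset (Fin n → Bool)),
            C (eval (bval σ) (p * X i)) * Epoly σ
            = C (eval (bval σ) p) * Epoly σ * X i
              - C (eval (bval σ) p) * (X i * Epoly σ - C (bval σ i) * Epoly σ) := by
          intro σ _
          simp only [map_mul, eval_X, C_mul]
          ring
        rw [Finset.sum_congr rfl hterm, Finset.sum_sub_distrib, ← Finset.sum_mul]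
        ring
      rw [heq]
      exact add_mem (Ideal.mul_mem_right _ _ hp) h2

lemma mem_of_eval {n : ℕ} (p : MvPolynomial (Fin n) ℝ)
    (h : ∀ σ : Fin n → Bool, eval (bval σ) p = 0) : p ∈ I01 n := by
  have hk := key p
  simpa [h] using hk


lemma eval_delta {n : ℕ} (σ : Fin n → Bool) (V I : Finset (Fin n)) (hIV : I ⊆ V) :
    eval (bval σ) (delta n V I)
      = if V.filter (fun i => σ i = true) = I then 1 else 0 := by
  classical
  rw [delta, map_mul, map_prod, map_prod]
  by_cases hTI : V.filter (fun i => σ i = true) = I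
  · rw [if_pos hTI]
    have p1 : (∏ i ∈ I, eval (bval σ) (X i : MvPolynomial (Fin n) ℝ)) = 1 :=
      Finset.prod_eq_one (fun i hi => by
        have hiF : i ∈ V.filter (fun i => σ i = true) := by rw [hTI]; exact hi
        have hit : σ i = true := (Finset.mem_filter.1 hiF).2
        simp [bval, hit])
    have p2 : (∏ j ∈ V \ I, eval (bval σ) (1 - X j : MvPolynomial (Fin n) ℝ)) = 1 :=
      Finset.prod_eq_one (fun j hj => by
        obtain ⟨hjV, hjI⟩ := Finset.mem_sdiff.1 hj
        have hjf : σ j = false := by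
          cases h : σ j
          · rfl
          · exact absurd (by rw [← hTI]; exact Finset.mem_filter.2 ⟨hjV, h⟩ : j ∈ I) hjI
        simp [bval, hjf])
    rw [p1, p2, mul_one]
  · rw [if_neg hTI]
    by_cases hA : ∀ i ∈ I, σ i = true
    · have hB : ¬ ∀ j ∈ V \ I, σ j = false := by
        intro hB
        apply hTI
        ext a
        simp only [Finset.mem_filter]
        constructor
        · rintro ⟨haV, haσ⟩
          by_contra haI
          have hf := hB a (Finset.mem_sdiff.2 ⟨haV, haI⟩)
          rw [haσ] at hf; cases hf
        · intro haI; exact ⟨hIV haI, hA a haI⟩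
      push_neg at hB
      obtain ⟨j, hj, hjt⟩ := hB
      have hjt' : σ j = true := by
        cases h : σ j
        · exact absurd h hjt
        · rfl
      rw [Finset.prod_eq_zero hj
        (by simp [bval, hjt'] : eval (bval σ) (1 - X j : MvPolynomial (Fin n) ℝ) = 0), mul_zero]
    · push_neg at hA
      obtain ⟨i, hi, hit⟩ := hA
      have hif : σ i = false := by
        cases h : σ i
        · rfl
        · exact absurd h hit
      rw [Finset.prod_eq_zero hi
        (by simp [bval, hif] : eval (bval σ) (X i : MvPolynomial (Fin n) ℝ) = 0), zero_mul]


end CertAux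

open CertAux in
/-- Explicit certificate for the full-circulant pitch-2 inequality.
Variables are indexed by `Fin n` (so `x_1` is `X ⟨0, _⟩`, `x_2` is `X ⟨1, _⟩`,
and `V = {3, …, n}` is the set of indices with value `≥ 2`). -/
theorem full_circulant_pitch_two_certificate (n : ℕ) (hn : 3 ≤ n) :
    ∀ (e₁ e₂ : Fin n), e₁ = ⟨0, by omega⟩ → e₂ = ⟨1, by omega⟩ →
    ∀ (V : Finset (Fin n)), V = Finset.univ.filter (fun i => 2 ≤ i.val) →
    ∀ (g : Fin n → MvPolynomial (Fin n) ℝ),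
      (g = fun i => (∑ j ∈ Finset.univ \ {i}, X j) - 1) →
    (∑ j, X j) - 2 -
      (delta n V ∅ * (g e₁ + g e₂) +
       (∑ i ∈ V, delta n V {i} * g i) +
       ∑ k ∈ Finset.Icc 2 n,
         (∑ I ∈ Finset.powersetCard k V, delta n V I) *
           (X e₁ + X e₂ + C ((k : ℝ) - 2))) ∈ I01 n := by
  intro e₁ e₂ he₁ he₂ V hV g hg
  refine CertAux.mem_of_eval _ fun σ => ?_
  classical
  subst hV hg
  simp only [map_sub, map_add, map_mul, map_sum, eval_X, eval_C, map_one, map_ofNat]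

  set W : Finset (Fin n) := Finset.univ.filter (fun i => 2 ≤ i.val) with hW
  set T : Finset (Fin n) := W.filter (fun i => σ i = true) with hT
  -- rewrite evals of delta
  have hd0 : eval (bval σ) (delta n W ∅) = if T = ∅ then 1 else 0 :=
    eval_delta σ W ∅ (Finset.empty_subset _)
  have hd1 : (∑ i ∈ W, eval (bval σ) (delta n W {i}) * ((∑ j ∈ Finset.univ \ {i}, bval σ j) - 1))
      = ∑ i ∈ W, (if T = {i} then (1:ℝ) else 0) * ((∑ j ∈ Finset.univ \ {i}, bval σ j) - 1) :=
    Finset.sum_congr rfl fun i hi => by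
      rw [eval_delta σ W {i} (Finset.singleton_subset_iff.2 hi)]
  have hd2 : ∀ k, (∑ I ∈ Finset.powersetCard k W, eval (bval σ) (delta n W I))
      = if T.card = k then (1:ℝ) else 0 := by
    intro k
    have hc : ∀ I ∈ Finset.powersetCard k W, eval (bval σ) (delta n W I)
        = if T = I then (1:ℝ) else 0 :=
      fun I hI => eval_delta σ W I (Finset.mem_powersetCard.1 hI).1
    rw [Finset.sum_congr rfl hc, Finset.sum_ite_eq]
    have hTW : T ⊆ W := Finset.filter_subset _ _
    by_cases h : T.card = k
    · rw [if_pos (Finset.mem_powersetCard.2 ⟨hTW, h⟩), if_pos h]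
    · rw [if_neg (fun hmem => h (Finset.mem_powersetCard.1 hmem).2), if_neg h]
  rw [hd0, hd1]
  simp only [hd2, ite_mul, one_mul, zero_mul, Finset.sum_ite_eq]
  -- sums over univ minus a point
  have hsd : ∀ i : Fin n, (∑ j ∈ Finset.univ \ {i}, bval σ j) = (∑ j, bval σ j) - bval σ i :=
    fun i => by rw [Finset.sum_sdiff_eq_sub (Finset.subset_univ _), Finset.sum_singleton]
  simp only [hsd]
  -- total sum decomposition
  have hWsum : (∑ j ∈ W, bval σ j) = (T.card : ℝ) := by
    rw [hT]
    simp only [bval]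
    rw [Finset.sum_boole]
  have he1W : e₁ ∉ W := by
    subst he₁; simp [hW]
  have he2W : e₂ ∉ W := by
    subst he₂; simp [hW]
  have he12 : e₁ ≠ e₂ := by
    subst he₁ he₂; simp [Fin.ext_iff]
  have huniv : (Finset.univ : Finset (Fin n)) = insert e₁ (insert e₂ W) := by
    subst he₁ he₂
    ext i
    rcases i with ⟨iv, hiv⟩
    simp only [Finset.mem_univ, Finset.mem_insert, hW, Finset.mem_filter, true_and,
      Fin.mk.injEq, true_iff]
    omega
  have hm : (∑ j, bval σ j) = bval σ e₁ + bval σ e₂ + (T.card : ℝ) := by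
    rw [huniv, Finset.sum_insert (by simp [Finset.mem_insert, he12, he1W]),
      Finset.sum_insert he2W, hWsum]
    ring
  rcases Nat.lt_or_ge T.card 2 with h2 | h2
  · rcases Nat.lt_or_ge T.card 1 with h1 | h1
    · -- card 0
      have hT0 : T = ∅ := Finset.card_eq_zero.1 (by omega)
      have hmid : (∑ i ∈ W, if T = {i} then (∑ j, bval σ j) - bval σ i - 1 else 0) = 0 :=
        Finset.sum_eq_zero fun i _ =>
          if_neg (by rw [hT0]; exact (Finset.singleton_ne_empty i).symm)
      have hIcc : T.card ∉ Finset.Icc 2 n := by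
        rw [hT0]; simp
      rw [hmid, if_pos hT0, if_neg hIcc, hm, show T.card = 0 from by omega]
      push_cast
      ring
    · -- card 1
      have hc1 : T.card = 1 := by omega
      obtain ⟨i₀, hTi⟩ := Finset.card_eq_one.1 hc1
      have hi₀T : i₀ ∈ T := hTi ▸ Finset.mem_singleton_self i₀
      have hi₀W : i₀ ∈ W := (Finset.mem_filter.1 hi₀T).1
      have hσi₀ : σ i₀ = true := (Finset.mem_filter.1 hi₀T).2
      have hb : bval σ i₀ = 1 := by simp [bval, hσi₀]
      have hmid : (∑ i ∈ W, if T = {i} then (∑ j, bval σ j) - bval σ i - 1 else 0)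
          = (∑ j, bval σ j) - bval σ i₀ - 1 := by
        have hcg : ∀ i ∈ W, (if T = {i} then (∑ j, bval σ j) - bval σ i - 1 else 0)
            = if i₀ = i then ((∑ j, bval σ j) - bval σ i - 1) else 0 := by
          intro i _
          rw [hTi]
          by_cases h : i₀ = i
          · rw [if_pos (by rw [h]), if_pos h]
          · rw [if_neg (fun hs => h (Finset.singleton_inj.1 hs)), if_neg h]
        rw [Finset.sum_congr rfl hcg, Finset.sum_ite_eq, if_pos hi₀W]
      have hTne : T ≠ ∅ := by rw [hTi]; exact Finset.singleton_ne_empty i₀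
      have hIcc : T.card ∉ Finset.Icc 2 n := by rw [hc1]; simp
      rw [hmid, if_neg hTne, if_neg hIcc, hb, hm, hc1]
      push_cast
      ring
  · -- card ≥ 2
    have hTne : T ≠ ∅ := by
      intro h; rw [h, Finset.card_empty] at h2; omega
    have hmid : (∑ i ∈ W, if T = {i} then (∑ j, bval σ j) - bval σ i - 1 else 0) = 0 :=
      Finset.sum_eq_zero fun i _ =>
        if_neg (fun h => by rw [h, Finset.card_singleton] at h2; omega)
    have hIcc : T.card ∈ Finset.Icc 2 n := by
      rw [Finset.mem_Icc]
      exact ⟨h2, le_trans (Finset.card_le_univ T) (by simp)⟩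
    rw [hmid, if_neg hTne, if_pos hIcc, hm]
    push_cast
    ring
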